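/- Let c ∈ ℝ with |c| ≤ 1/8 and let δ ∈ (0, 1/2]. Then every complex root λ of the cubic λ³ − (1−δ)λ² + cλ − c = 0 satisfies |λ| < 1 − δ/2. -/

import Mathlib

/-- Root-location bound for the cubic `λ³ − (1−δ)λ² + cλ − c`: if `|c| ≤ 1/8` and
`δ ∈ (0, 1/2]`, then every complex root has modulus `< 1 − δ/2`. -/
theorem stmt2 (c : ℝ) (hc : |c| ≤ 1 / 8) (δ : ℝ) (hδ : δ ∈ Set.Ioc (0 : ℝ) (1 / 2))
    (lam : ℂ) (hlam : lam ^ 3 - (1 - (δ : ℂ)) * lam ^ 2 + (c : ℂ) * lam - (c : ℂ) = 0) :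
    ‖lam‖ < 1 - δ / 2 := by
  obtain ⟨hδ0, hδ1⟩ := hδ
  by_contra hcon
  push_neg at hcon
  set t := ‖lam‖ with ht
  set s := ‖lam - (1 - (δ : ℂ))‖ with hs
  have key : lam ^ 2 * (lam - (1 - (δ : ℂ))) = (c : ℂ) * (1 - lam) := by
    linear_combination hlam
  have habs : t ^ 2 * s = |c| * ‖1 - lam‖ := by
    have := congrArg norm key
    simpa [norm_mul, norm_pow, Complex.norm_real, Real.norm_eq_abs] using this
  have habsd : ‖1 - (δ : ℂ)‖ = 1 - δ := by
    have : ((1 : ℂ) - (δ : ℂ)) = ((1 - δ : ℝ) : ℂ) := by push_cast; ring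
    rw [this, Complex.norm_real, Real.norm_eq_abs, abs_of_nonneg (by linarith)]
  have hslb : t - (1 - δ) ≤ s := by
    have h2 : lam = (lam - (1 - (δ : ℂ))) + (1 - (δ : ℂ)) := by ring
    have := norm_add_le (lam - (1 - (δ : ℂ))) (1 - (δ : ℂ))
    rw [habsd] at this
    rw [ht, h2]
    linarith
  have hub : ‖1 - lam‖ ≤ s + δ := by
    have h1 : (1 : ℂ) - lam = -(lam - (1 - (δ : ℂ))) + (δ : ℂ) := by ring
    calc ‖1 - lam‖ ≤ ‖-(lam - (1 - (δ : ℂ)))‖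
          + ‖(δ : ℂ)‖ := by rw [h1]; exact norm_add_le _ _
      _ = s + δ := by
          rw [norm_neg, Complex.norm_real, Real.norm_eq_abs, abs_of_pos hδ0]
  have hcabs : 0 ≤ |c| := abs_nonneg c
  have hsnn : 0 ≤ s := norm_nonneg _
  -- t ≥ 1 - δ/2 ≥ 3/4, so t^2 ≥ 9/16; s ≥ δ/2
  have ht34 : (3 : ℝ) / 4 ≤ t := by linarith
  have hs2 : δ / 2 ≤ s := by linarith
  have hmain : t ^ 2 * s ≤ (1 / 8) * (s + δ) := by
    calc t ^ 2 * s = |c| * ‖1 - lam‖ := habs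
      _ ≤ (1 / 8) * (s + δ) := by
          have h0 : 0 ≤ ‖1 - lam‖ := norm_nonneg _
          nlinarith
  nlinarith [sq_nonneg t, mul_le_mul_of_nonneg_right (pow_le_pow_left₀ (by norm_num) ht34 2) hsnn]
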